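/- Let M be a 3-array of perfect matchings of a cubic graph G with no triply covered edge. Then every component of the core of M is an even circuit which alternates doubly covered and uncovered edges. -/

import Mathlib

open SimpleGraph

variable {V : Type} [Fintype V] [DecidableEq V]

/-- A cubic graph: every vertex has exactly three neighbours. -/
def IsCubic (G : SimpleGraph V) : Prop := ∀ v : V, (G.neighborSet v).ncard = 3

/-- A proper 3-edge-colouring: adjacent (distinct, vertex-sharing) edges get distinct colours. -/
def ProperEdgeColoring (G : SimpleGraph V) (c : Sym2 V → Fin 3) : Prop :=
  ∀ e₁ ∈ G.edgeSet, ∀ e₂ ∈ G.edgeSet, e₁ ≠ e₂ → (∃ v : V, v ∈ e₁ ∧ v ∈ e₂) → c e₁ ≠ c e₂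

def ThreeEdgeColorable (G : SimpleGraph V) : Prop :=
  ∃ c : Sym2 V → Fin 3, ProperEdgeColoring G c

/-- 2-connectedness: at least 3 vertices, connected, and deleting any vertex leaves it connected. -/
def TwoConnected (G : SimpleGraph V) : Prop :=
  3 ≤ Fintype.card V ∧ G.Connected ∧
    ∀ v : V, ((⊤ : G.Subgraph).deleteVerts {v}).coe.Connected

/-- A snark: a 2-connected cubic graph with no proper 3-edge-colouring. -/
def IsSnark (G : SimpleGraph V) : Prop :=
  IsCubic G ∧ TwoConnected G ∧ ¬ ThreeEdgeColorable G

/-- The set of edges left uncovered by a 3-array of perfect matchings. -/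
def uncovered (G : SimpleGraph V) (M : Fin 3 → G.Subgraph) : Set (Sym2 V) :=
  {e | e ∈ G.edgeSet ∧ ∀ i, e ∉ (M i).edgeSet}

/-- The colouring defect: minimum number of uncovered edges over all 3-arrays. -/
noncomputable def defect (G : SimpleGraph V) : ℕ :=
  sInf {n : ℕ | ∃ M : Fin 3 → G.Subgraph,
    (∀ i, (M i).IsPerfectMatching) ∧ n = (uncovered G M).ncard}

/-- The number of matchings of the 3-array containing a given edge. -/
noncomputable def coverCount (G : SimpleGraph V) (M : Fin 3 → G.Subgraph)
    (e : Sym2 V) : ℕ :=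
  {i : Fin 3 | e ∈ (M i).edgeSet}.ncard

/-- The edge set of the core: edges of `G` not simply covered. -/
def coreEdges (G : SimpleGraph V) (M : Fin 3 → G.Subgraph) : Set (Sym2 V) :=
  {e | e ∈ G.edgeSet ∧ coverCount G M e ≠ 1}

/-- The core of a 3-array, as a graph on `V`. -/
def coreGraph (G : SimpleGraph V) (M : Fin 3 → G.Subgraph) : SimpleGraph V where
  Adj u w := G.Adj u w ∧ coverCount G M s(u, w) ≠ 1
  symm := by
    constructor
    intro u w h
    refine ⟨h.1.symm, ?_⟩
    rw [Sym2.eq_swap]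
    exact h.2
  loopless := by
    constructor
    intro v h
    exact (G.ne_of_adj h.1) rfl

set_option linter.unusedSectionVars false
set_option maxHeartbeats 800000

lemma cc_eq (G : SimpleGraph V) (M : Fin 3 → G.Subgraph) (v u : V) :
    coverCount G M s(v, u) = ({m : Fin 3 | (M m).Adj v u}).ncard := by
  unfold coverCount
  congr 1

lemma fin3_univ : ∀ i j k m : Fin 3, i ≠ j → k ≠ i → k ≠ j →
    (m = i ∨ m = j ∨ m = k) := by decide

lemma fin3_third : ∀ i j : Fin 3, ∃ k, k ≠ i ∧ k ≠ j := by decide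

lemma cc_le (G : SimpleGraph V) (M : Fin 3 → G.Subgraph) (e : Sym2 V) :
    coverCount G M e ≤ 3 := by
  unfold coverCount
  calc ({i : Fin 3 | e ∈ (M i).edgeSet}).ncard ≤ (Set.univ : Set (Fin 3)).ncard :=
        Set.ncard_le_ncard (Set.subset_univ _) Set.finite_univ
    _ = 3 := by simp [Set.ncard_univ]

lemma vertex_struct (G : SimpleGraph V) (hG : ∀ v : V, (G.neighborSet v).ncard = 3)
    (M : Fin 3 → G.Subgraph) (hM : ∀ i, (M i).IsPerfectMatching)
    (h3 : ∀ e ∈ G.edgeSet, coverCount G M e ≠ 3)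
    (v : V) (hv : ∃ e ∈ coreEdges G M, v ∈ e) :
    (∃ e2, {e | e ∈ G.edgeSet ∧ v ∈ e ∧ coverCount G M e = 2} = {e2}) ∧
    (∃ e0, {e | e ∈ G.edgeSet ∧ v ∈ e ∧ coverCount G M e = 0} = {e0}) := by
  classical
  have hpart : ∀ m : Fin 3, ∃! w, (M m).Adj v w := fun m => (hM m).1 ((hM m).2 v)
  choose w hw hw' using hpart
  have adj : ∀ m, G.Adj v (w m) := fun m => (M m).adj_sub (hw m)
  have key : ∀ u : V, coverCount G M s(v, u) = ({m : Fin 3 | w m = u}).ncard := by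
    intro u
    rw [cc_eq]
    congr 1
    ext m
    simp only [Set.mem_setOf_eq]
    constructor
    · intro h; exact (hw' m u h).symm
    · rintro rfl; exact hw m
  -- w is not injective
  have hninj : ¬ Function.Injective w := by
    intro hinj
    have hrange : Set.range w = G.neighborSet v := by
      apply Set.eq_of_subset_of_ncard_le
      · rintro _ ⟨m, rfl⟩; exact adj m
      · rw [hG v]
        have : (Set.range w).ncard = 3 := by
          rw [← Set.image_univ, Set.ncard_image_of_injective _ hinj]
          simp [Set.ncard_univ]
        omega
      · exact Set.toFinite _
    obtain ⟨e, ⟨heE, hcc⟩, hve⟩ := hv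
    obtain ⟨u, rfl⟩ := Sym2.mem_iff_exists.mp hve
    have hu : u ∈ G.neighborSet v := G.mem_edgeSet.mp heE
    rw [← hrange] at hu
    obtain ⟨m, rfl⟩ := hu
    apply hcc
    rw [key]
    have : {m' : Fin 3 | w m' = w m} = {m} := by
      ext m'; simp only [Set.mem_setOf_eq, Set.mem_singleton_iff]
      exact ⟨fun h => hinj h, fun h => by rw [h]⟩
    rw [this, Set.ncard_singleton]
  obtain ⟨i, j, hwij, hij⟩ := Function.not_injective_iff.mp hninj
  obtain ⟨k, hki, hkj⟩ := fin3_third i j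
  have hmem : ∀ m : Fin 3, m = i ∨ m = j ∨ m = k := fun m => fin3_univ i j k m hij hki hkj
  have hwk : w k ≠ w i := by
    intro h
    apply h3 s(v, w i) (G.mem_edgeSet.mpr (adj i))
    rw [key]
    have : {m : Fin 3 | w m = w i} = Set.univ := by
      ext m
      simp only [Set.mem_setOf_eq, Set.mem_univ, iff_true]
      rcases hmem m with rfl | rfl | rfl
      · rfl
      · exact hwij.symm
      · exact h
    rw [this]
    simp [Set.ncard_univ]
  -- the three cover counts
  have hset2 : {m : Fin 3 | w m = w i} = {i, j} := by
    ext m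
    simp only [Set.mem_setOf_eq, Set.mem_insert_iff, Set.mem_singleton_iff]
    constructor
    · intro h
      rcases hmem m with rfl | rfl | rfl
      · exact Or.inl rfl
      · exact Or.inr rfl
      · exact absurd h hwk
    · rintro (rfl | rfl)
      · rfl
      · exact hwij.symm
  have hcc2 : coverCount G M s(v, w i) = 2 := by
    rw [key, hset2, Set.ncard_pair hij]
  -- third neighbor
  have hsub : ({w i, w k} : Set V) ⊆ G.neighborSet v := by
    rintro u (rfl | rfl)
    · exact adj i
    · exact adj k
  have hdiff : (G.neighborSet v \ {w i, w k}).ncard = 1 := by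
    rw [Set.ncard_diff hsub (Set.toFinite _), hG v, Set.ncard_pair (Ne.symm hwk)]
  obtain ⟨u0, hu0⟩ := Set.ncard_eq_one.mp hdiff
  have hu0mem : u0 ∈ G.neighborSet v \ ({w i, w k} : Set V) := by rw [hu0]; rfl
  have hu0n : G.Adj v u0 := hu0mem.1
  have hu0i : u0 ≠ w i := fun h => hu0mem.2 (Or.inl h)
  have hu0k : u0 ≠ w k := fun h => hu0mem.2 (Or.inr h)
  have hcc0 : coverCount G M s(v, u0) = 0 := by
    rw [key]
    have : {m : Fin 3 | w m = u0} = ∅ := by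
      ext m
      simp only [Set.mem_setOf_eq, Set.mem_empty_iff_false, iff_false]
      intro h
      rcases hmem m with rfl | rfl | rfl
      · exact hu0i h.symm
      · exact hu0i (hwij ▸ h.symm)
      · exact hu0k h.symm
    rw [this, Set.ncard_empty]
  constructor
  · refine ⟨s(v, w i), ?_⟩
    ext e
    simp only [Set.mem_setOf_eq, Set.mem_singleton_iff]
    constructor
    · rintro ⟨heE, hve, hcc⟩
      obtain ⟨u, rfl⟩ := Sym2.mem_iff_exists.mp hve
      by_cases hu : u = w i
      · rw [hu]
      · exfalso
        rw [key] at hcc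
        have hsubk : {m : Fin 3 | w m = u} ⊆ {k} := by
          intro m hm
          simp only [Set.mem_setOf_eq] at hm
          rcases hmem m with rfl | rfl | rfl
          · exact absurd hm.symm hu
          · exact absurd (hwij ▸ hm).symm hu
          · rfl
        have := Set.ncard_le_ncard hsubk (Set.toFinite _)
        rw [Set.ncard_singleton] at this
        omega
    · rintro rfl
      exact ⟨G.mem_edgeSet.mpr (adj i), Sym2.mem_mk_left _ _, hcc2⟩
  · refine ⟨s(v, u0), ?_⟩
    ext e
    simp only [Set.mem_setOf_eq, Set.mem_singleton_iff]
    constructor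
    · rintro ⟨heE, hve, hcc⟩
      obtain ⟨u, rfl⟩ := Sym2.mem_iff_exists.mp hve
      rw [key] at hcc
      have hemp : {m : Fin 3 | w m = u} = ∅ :=
        (Set.ncard_eq_zero (Set.toFinite _)).mp hcc
      have hui : u ≠ w i := by
        intro h; have : i ∈ ({m : Fin 3 | w m = u} : Set (Fin 3)) := h.symm
        rw [hemp] at this; exact this
      have huk : u ≠ w k := by
        intro h; have : k ∈ ({m : Fin 3 | w m = u} : Set (Fin 3)) := h.symm
        rw [hemp] at this; exact this
      have : u ∈ G.neighborSet v \ ({w i, w k} : Set V) := by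
        refine ⟨G.mem_edgeSet.mp heE, ?_⟩
        rintro (h | h)
        · exact hui h
        · exact huk h
      rw [hu0, Set.mem_singleton_iff] at this
      rw [this]
    · rintro rfl
      exact ⟨G.mem_edgeSet.mpr hu0n, Sym2.mem_mk_left _ _, hcc0⟩

lemma sym2_rep (e : Sym2 V) : ∃ a b, e = s(a, b) := by
  induction e using Sym2.ind with
  | _ a b => exact ⟨a, b, rfl⟩

lemma double_count (G : SimpleGraph V) (M : Fin 3 → G.Subgraph)
    (K : (coreGraph G M).ConnectedComponent) (c : ℕ) (hc : c ≠ 1)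
    (huniq : ∀ v : V, (∃ e ∈ coreEdges G M, v ∈ e) →
      ∃ e', {e | e ∈ G.edgeSet ∧ v ∈ e ∧ coverCount G M e = c} = {e'}) :
    {v : V | ∃ e ∈ {e ∈ coreEdges G M | ∀ u ∈ e, (coreGraph G M).connectedComponentMk u = K}, v ∈ e}.ncard
      = 2 * {e ∈ coreEdges G M | (∀ u ∈ e, (coreGraph G M).connectedComponentMk u = K) ∧ coverCount G M e = c}.ncard := by
  classical
  set S : Set (Sym2 V) := {e ∈ coreEdges G M | ∀ u ∈ e, (coreGraph G M).connectedComponentMk u = K} with hS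
  set Sc : Set (Sym2 V) := {e ∈ coreEdges G M | (∀ u ∈ e, (coreGraph G M).connectedComponentMk u = K) ∧ coverCount G M e = c} with hSc
  set VK : Set V := {v : V | ∃ e ∈ S, v ∈ e} with hVK
  have hex : ∀ v ∈ VK, ∃ e, e ∈ G.edgeSet ∧ v ∈ e ∧ coverCount G M e = c := by
    intro v hv
    obtain ⟨e, heS, hve⟩ := hv
    obtain ⟨e', he'⟩ := huniq v ⟨e, heS.1, hve⟩
    refine ⟨e', ?_⟩
    have : e' ∈ {e | e ∈ G.edgeSet ∧ v ∈ e ∧ coverCount G M e = c} := by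
      rw [he']; exact rfl
    exact this
  have huniq' : ∀ v ∈ VK, ∀ e₁ e₂ : Sym2 V,
      (e₁ ∈ G.edgeSet ∧ v ∈ e₁ ∧ coverCount G M e₁ = c) →
      (e₂ ∈ G.edgeSet ∧ v ∈ e₂ ∧ coverCount G M e₂ = c) → e₁ = e₂ := by
    intro v hv e₁ e₂ h1 h2
    obtain ⟨e, heS, hve⟩ := hv
    obtain ⟨e', he'⟩ := huniq v ⟨e, heS.1, hve⟩
    have m1 : e₁ ∈ ({e'} : Set (Sym2 V)) := he' ▸ h1
    have m2 : e₂ ∈ ({e'} : Set (Sym2 V)) := he' ▸ h2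
    rw [Set.mem_singleton_iff] at m1 m2
    rw [m1, m2]
  let f : V → Sym2 V := fun v =>
    if h : ∃ e, e ∈ G.edgeSet ∧ v ∈ e ∧ coverCount G M e = c then h.choose else s(v, v)
  have hfspec : ∀ v ∈ VK, f v ∈ G.edgeSet ∧ v ∈ f v ∧ coverCount G M (f v) = c := by
    intro v hv
    have h := hex v hv
    simp only [f, dif_pos h]
    exact h.choose_spec
  have hcompK : ∀ v ∈ VK, (coreGraph G M).connectedComponentMk v = K := by
    intro v hv
    obtain ⟨e, heS, hve⟩ := hv
    exact heS.2 v hve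
  have hfSc : ∀ v ∈ VK, f v ∈ Sc := by
    intro v hv
    obtain ⟨hfe, hvf, hfc⟩ := hfspec v hv
    obtain ⟨u', hfu⟩ := Sym2.mem_iff_exists.mp hvf
    have hadj : G.Adj v u' := G.mem_edgeSet.mp (hfu ▸ hfe)
    have hcadj : (coreGraph G M).Adj v u' := ⟨hadj, by rw [← hfu, hfc]; exact hc⟩
    refine ⟨⟨hfe, by rw [hfc]; exact hc⟩, ?_, hfc⟩
    intro u hu
    rw [hfu] at hu
    rcases Sym2.mem_iff.mp hu with h1 | h1
    · rw [h1]; exact hcompK v hv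
    · rw [h1, ← hcompK v hv]
      exact (SimpleGraph.ConnectedComponent.eq.mpr hcadj.reachable).symm
  -- move to finsets
  have hVKfin : VK.Finite := Set.toFinite _
  have hScfin : Sc.Finite := Set.toFinite _
  rw [Set.ncard_eq_toFinset_card _ hVKfin, Set.ncard_eq_toFinset_card _ hScfin]
  have hmaps : ∀ v ∈ hVKfin.toFinset, f v ∈ hScfin.toFinset := by
    intro v hv
    rw [Set.Finite.mem_toFinset] at hv ⊢
    exact hfSc v hv
  have hterm : ∀ e ∈ hScfin.toFinset,
      (hVKfin.toFinset.filter (fun v => f v = e)).card = 2 := by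
    intro e he
    rw [Set.Finite.mem_toFinset] at he
    obtain ⟨a, b, hab⟩ := sym2_rep e
    subst hab
    obtain ⟨⟨heE, hne1⟩, hK, hcc⟩ := he
    have hne : a ≠ b := fun h => (G.not_isDiag_of_mem_edgeSet heE) (Sym2.mk_isDiag_iff.mpr h)
    have heS : s(a, b) ∈ S := ⟨⟨heE, hne1⟩, hK⟩
    have hfilter : (hVKfin.toFinset.filter (fun v => f v = s(a, b))) = {a, b} := by
      ext v
      simp only [Finset.mem_filter, Set.Finite.mem_toFinset, Finset.mem_insert,
        Finset.mem_singleton]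
      constructor
      · rintro ⟨hv, hfv⟩
        have h2 := (hfspec v hv).2.1
        rw [hfv] at h2
        exact Sym2.mem_iff.mp h2
      · intro hv
        have hvmem : v ∈ s(a, b) := by
          rcases hv with rfl | rfl
          · exact Sym2.mem_mk_left _ _
          · exact Sym2.mem_mk_right _ _
        have hvVK : v ∈ VK := ⟨s(a, b), heS, hvmem⟩
        refine ⟨hvVK, ?_⟩
        exact huniq' v hvVK _ _ (hfspec v hvVK) ⟨heE, hvmem, hcc⟩
    rw [hfilter, Finset.card_pair hne]
  calc hVKfin.toFinset.card
      = ∑ e ∈ hScfin.toFinset, (hVKfin.toFinset.filter (fun v => f v = e)).card :=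
        Finset.card_eq_sum_card_fiberwise hmaps
    _ = ∑ _e ∈ hScfin.toFinset, 2 := Finset.sum_congr rfl hterm
    _ = hScfin.toFinset.card * 2 := by rw [Finset.sum_const, smul_eq_mul]
    _ = 2 * hScfin.toFinset.card := mul_comm _ _

theorem stmt_7 (G : SimpleGraph V) (hG : IsCubic G)
    (M : Fin 3 → G.Subgraph) (hM : ∀ i, (M i).IsPerfectMatching)
    (h3 : ∀ e ∈ G.edgeSet, coverCount G M e ≠ 3) :
    (∀ v : V, (∃ e ∈ coreEdges G M, v ∈ e) →
      {e ∈ coreEdges G M | v ∈ e ∧ coverCount G M e = 2}.ncard = 1 ∧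
      {e ∈ coreEdges G M | v ∈ e ∧ coverCount G M e = 0}.ncard = 1) ∧
    (∀ K : (coreGraph G M).ConnectedComponent,
      (∃ e ∈ coreEdges G M, ∀ v ∈ e, (coreGraph G M).connectedComponentMk v = K) →
      Even {e ∈ coreEdges G M |
        ∀ v ∈ e, (coreGraph G M).connectedComponentMk v = K}.ncard) := by
  classical
  have huniq2 : ∀ v : V, (∃ e ∈ coreEdges G M, v ∈ e) →
      ∃ e', {e | e ∈ G.edgeSet ∧ v ∈ e ∧ coverCount G M e = 2} = {e'} :=
    fun v hv => (vertex_struct G hG M hM h3 v hv).1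
  have huniq0 : ∀ v : V, (∃ e ∈ coreEdges G M, v ∈ e) →
      ∃ e', {e | e ∈ G.edgeSet ∧ v ∈ e ∧ coverCount G M e = 0} = {e'} :=
    fun v hv => (vertex_struct G hG M hM h3 v hv).2
  constructor
  · intro v hv
    constructor
    · obtain ⟨e2, he2⟩ := huniq2 v hv
      have : {e ∈ coreEdges G M | v ∈ e ∧ coverCount G M e = 2}
          = {e | e ∈ G.edgeSet ∧ v ∈ e ∧ coverCount G M e = 2} := by
        ext e
        simp only [Set.mem_setOf_eq, coreEdges]
        constructor
        · rintro ⟨⟨h1, h2⟩, h3', h4⟩; exact ⟨h1, h3', h4⟩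
        · rintro ⟨h1, h2, h3'⟩; exact ⟨⟨h1, by omega⟩, h2, h3'⟩
      rw [this, he2, Set.ncard_singleton]
    · obtain ⟨e0, he0⟩ := huniq0 v hv
      have : {e ∈ coreEdges G M | v ∈ e ∧ coverCount G M e = 0}
          = {e | e ∈ G.edgeSet ∧ v ∈ e ∧ coverCount G M e = 0} := by
        ext e
        simp only [Set.mem_setOf_eq, coreEdges]
        constructor
        · rintro ⟨⟨h1, h2⟩, h3', h4⟩; exact ⟨h1, h3', h4⟩
        · rintro ⟨h1, h2, h3'⟩; exact ⟨⟨h1, by omega⟩, h2, h3'⟩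
      rw [this, he0, Set.ncard_singleton]
  · intro K _
    have d2 := double_count G M K 2 (by norm_num) huniq2
    have d0 := double_count G M K 0 (by norm_num) huniq0
    set S2 : Set (Sym2 V) := {e ∈ coreEdges G M |
      (∀ u ∈ e, (coreGraph G M).connectedComponentMk u = K) ∧ coverCount G M e = 2} with hS2
    set S0 : Set (Sym2 V) := {e ∈ coreEdges G M |
      (∀ u ∈ e, (coreGraph G M).connectedComponentMk u = K) ∧ coverCount G M e = 0} with hS0
    have hU : {e ∈ coreEdges G M |
        ∀ v ∈ e, (coreGraph G M).connectedComponentMk v = K} = S2 ∪ S0 := by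
      ext e
      simp only [Set.mem_setOf_eq, Set.mem_union, hS2, hS0]
      constructor
      · rintro ⟨⟨h1, h2⟩, hK⟩
        have hle := cc_le G M e
        have hne3 := h3 e h1
        have : coverCount G M e = 2 ∨ coverCount G M e = 0 := by omega
        rcases this with h | h
        · exact Or.inl ⟨⟨h1, h2⟩, hK, h⟩
        · exact Or.inr ⟨⟨h1, h2⟩, hK, h⟩
      · rintro (⟨h1, h2, _⟩ | ⟨h1, h2, _⟩)
        · exact ⟨h1, h2⟩
        · exact ⟨h1, h2⟩
    have hdisj : Disjoint S2 S0 := by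
      rw [Set.disjoint_left]
      rintro e ⟨_, _, h2⟩ ⟨_, _, h0⟩
      omega
    rw [hU, Set.ncard_union_eq hdisj (Set.toFinite _) (Set.toFinite _)]
    exact ⟨S0.ncard, by omega⟩
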